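/- A graph G is a cograph if and only if no induced subgraph of G has an adjacency eigenvalue in the open interval (-1, 0). -/

import Mathlib

open scoped Classical

noncomputable section

/-- The real adjacency matrix of a finite simple graph. -/
def adjM {V : Type*} [Fintype V] (G : SimpleGraph V) : Matrix V V ℝ :=
  G.adjMatrix ℝ

/-- The multiplicity of `μ` as an eigenvalue of the adjacency matrix of `G`
(the dimension of the corresponding eigenspace; `0` if `μ` is not an eigenvalue). -/
def eigMult {V : Type*} [Fintype V] (G : SimpleGraph V) (μ : ℝ) : ℕ :=
  Module.finrank ℝ (Module.End.eigenspace (Matrix.toLin' (adjM G)) μ)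

/-- `μ` is an eigenvalue of the adjacency matrix of `G`. -/
def HasEig {V : Type*} [Fintype V] (G : SimpleGraph V) (μ : ℝ) : Prop :=
  Module.End.HasEigenvalue (Matrix.toLin' (adjM G)) μ

/-- A cograph: no induced path on four vertices. -/
def IsCograph {V : Type*} (G : SimpleGraph V) : Prop :=
  IsEmpty (SimpleGraph.pathGraph 4 ↪g G)

/-- A duplication class: a maximal set of more than one vertex, all with the same
open neighborhood. -/
def IsDupClass {V : Type*} (G : SimpleGraph V) (S : Set V) : Prop :=
  1 < S.ncard ∧ (∀ u ∈ S, ∀ v ∈ S, G.neighborSet u = G.neighborSet v) ∧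
    ∀ T : Set V, S ⊆ T → (∀ u ∈ T, ∀ v ∈ T, G.neighborSet u = G.neighborSet v) → T = S

/-- A coduplication class: a maximal set of more than one vertex, all with the same
closed neighborhood. -/
def IsCodupClass {V : Type*} (G : SimpleGraph V) (S : Set V) : Prop :=
  1 < S.ncard ∧
    (∀ u ∈ S, ∀ v ∈ S, insert u (G.neighborSet u) = insert v (G.neighborSet v)) ∧
    ∀ T : Set V, S ⊆ T →
      (∀ u ∈ T, ∀ v ∈ T, insert u (G.neighborSet u) = insert v (G.neighborSet v)) → T = S

open SimpleGraph

universe u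

lemma hasEig_iff {V : Type*} [Fintype V] (G : SimpleGraph V) (μ : ℝ) :
    HasEig G μ ↔ ∃ x : V → ℝ, x ≠ 0 ∧ (adjM G).mulVec x = μ • x := by
  unfold HasEig
  constructor
  · intro h
    obtain ⟨x, hx, hx0⟩ := h.exists_hasEigenvector
    exact ⟨x, hx0, by simpa [Matrix.toLin'_apply] using Module.End.mem_eigenspace_iff.mp hx⟩
  · rintro ⟨x, hx0, hx⟩
    exact Module.End.hasEigenvalue_of_hasEigenvector
      ⟨Module.End.mem_eigenspace_iff.mpr (by simpa [Matrix.toLin'_apply] using hx), hx0⟩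

lemma p4_hasEig {W : Type*} [Fintype W] (G : SimpleGraph W) (φ : SimpleGraph.pathGraph 4 ≃g G) :
    HasEig G ((1 - Real.sqrt 5)/2) := by
  set μ : ℝ := (1 - Real.sqrt 5)/2 with hμ
  have h5 : Real.sqrt 5 ^ 2 = 5 := Real.sq_sqrt (by norm_num)
  have hsq : μ ^ 2 = μ + 1 := by rw [hμ]; ring_nf; nlinarith [h5]
  rw [hasEig_iff]
  refine ⟨fun w => ![1, μ, μ, 1] (φ.symm w), ?_, ?_⟩
  · intro h
    have := congrFun h (φ 0)
    simp at this
  · funext u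
    have hadj : ∀ i j : Fin 4, G.Adj (φ i) (φ j) ↔ (pathGraph 4).Adj i j := fun i j =>
      φ.map_adj_iff
    have hre : ∀ f : W → ℝ, (∑ w : W, f w) = ∑ i : Fin 4, f (φ i) :=
      fun f => (Fintype.sum_equiv φ.toEquiv _ _ (fun i => rfl)).symm
    have hmv : ((adjM G).mulVec fun w => ![1, μ, μ, 1] (φ.symm w)) u
        = ∑ i : Fin 4, (if G.Adj u (φ i) then 1 else 0) * ![1, μ, μ, 1] i := by
      rw [Matrix.mulVec, dotProduct]
      rw [hre (fun w => adjM G u w * ![1, μ, μ, 1] (φ.symm w))]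
      refine Finset.sum_congr rfl fun i _ => ?_
      simp [adjM, SimpleGraph.adjMatrix_apply]
    rw [hmv]
    have hu : u = φ (φ.symm u) := (φ.apply_symm_apply u).symm
    rw [hu]
    generalize φ.symm u = j
    simp only [hadj, Pi.smul_apply, Equiv.symm_apply_apply]
    fin_cases j <;> simp [Fin.sum_univ_four, pathGraph_adj, show ((3:Fin 4):ℕ)=3 from rfl, show ((2:Fin 4):ℕ)=2 from rfl, show ((1:Fin 4):ℕ)=1 from rfl, show ((0:Fin 4):ℕ)=0 from rfl] <;> nlinarith [hsq]


lemma IsCograph.induce {V : Type*} {G : SimpleGraph V} (h : IsCograph G) (s : Set V) :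
    IsCograph (G.induce s) :=
  ⟨fun f => h.elim ((SimpleGraph.Embedding.induce s).comp f)⟩

/-- The self-complementarity permutation of `P4`. -/
def p4perm : Fin 4 ≃ Fin 4 where
  toFun := ![1, 3, 0, 2]
  invFun := ![2, 0, 3, 1]
  left_inv := by decide
  right_inv := by decide

lemma p4perm_adj (a b : Fin 4) :
    (pathGraph 4).Adj a b ↔ ¬(pathGraph 4).Adj (p4perm a) (p4perm b) ∧ p4perm a ≠ p4perm b := by
  fin_cases a <;> fin_cases b <;>
    simp [pathGraph_adj, p4perm, Fin.ext_iff] <;> decide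

/-- From an embedding of `P4` into the complement, get one into the graph. -/
def p4ComplEmb {V : Type*} {G : SimpleGraph V} (f : pathGraph 4 ↪g Gᶜ) :
    pathGraph 4 ↪g G where
  toFun := fun i => f (p4perm i)
  inj' := f.injective.comp p4perm.injective
  map_rel_iff' := by
    intro a b
    simp only [Function.Embedding.coeFn_mk]
    rw [p4perm_adj a b]
    constructor
    · intro h
      refine ⟨fun hc => ?_, fun hc => ?_⟩
      · exact ((SimpleGraph.compl_adj G _ _).mp (f.map_rel_iff.mpr hc)).2 h
      · exact (G.irrefl (hc ▸ h) : False)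
    · rintro ⟨hnadj, hne⟩
      by_contra hG
      exact hnadj (f.map_rel_iff.mp ((SimpleGraph.compl_adj G _ _).mpr ⟨f.injective.ne hne, hG⟩))
/-- Build a `P4` embedding from four vertices with the right adjacency pattern. -/
lemma p4_emb_of_verts {V : Type*} (G : SimpleGraph V) (a b c d : V)
    (hab : G.Adj a b) (hbc : G.Adj b c) (hcd : G.Adj c d)
    (hac : ¬G.Adj a c) (had : ¬G.Adj a d) (hbd : ¬G.Adj b d) :
    Nonempty (pathGraph 4 ↪g G) := by
  have hac' : a ≠ c := fun h => had (h ▸ hcd)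
  have hbd' : b ≠ d := fun h => had (h ▸ hab)
  have had' : a ≠ d := fun h => hac (h ▸ hcd.symm)
  refine ⟨⟨⟨![a, b, c, d], ?_⟩, ?_⟩⟩
  · intro i j hij
    fin_cases i <;> fin_cases j <;>
      simp_all [hab.ne, hbc.ne, hcd.ne, hac', hbd', had'] <;>
      first
        | rfl
        | exact absurd hij (by simp_all [eq_comm])
  · intro i j
    fin_cases i <;> fin_cases j <;>
      simp [pathGraph_adj, show ((3:Fin 4):ℕ)=3 from rfl, show ((2:Fin 4):ℕ)=2 from rfl,
        show ((1:Fin 4):ℕ)=1 from rfl, show ((0:Fin 4):ℕ)=0 from rfl, hab, hbc, hcd, hac, had, hbd,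
        hab.symm, hbc.symm, hcd.symm, G.irrefl, RelEmbedding.coe_mk, Function.Embedding.coeFn_mk] <;>
      first
        | exact fun h => hac h.symm
        | exact fun h => had h.symm
        | exact fun h => hbd h.symm
        | decide
        | assumption
        | exact hab.symm
        | exact hbc.symm
        | exact hcd.symm

lemma walk_prefix {V : Type*} (G : SimpleGraph V) :
    ∀ (u v : V) (_ : G.Walk u v) (hu : u ∈ ({v}ᶜ : Set V)),
      ∃ (a : V) (ha : a ∈ ({v}ᶜ : Set V)), G.Adj a v ∧
        (G.induce ({v}ᶜ : Set V)).Reachable ⟨u, hu⟩ ⟨a, ha⟩ := by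
  intro u v w
  induction w with
  | nil =>
    intro hu
    exact absurd (Set.mem_compl_singleton_iff.mp hu) (by simp)
  | @cons a b c h _ ih =>
    intro hu
    by_cases hb : b = c
    · exact ⟨a, hu, hb ▸ h, Reachable.refl _⟩
    · obtain ⟨x, hx, hxv, hr⟩ := ih (Set.mem_compl_singleton_iff.mpr hb)
      refine ⟨x, hx, hxv, Reachable.trans (Adj.reachable ?_) hr⟩
      exact h

lemma walk_boundary {V : Type*} (G : SimpleGraph V) (v : V) :
    ∀ (x y : ({v}ᶜ : Set V)) (_ : (G.induce ({v}ᶜ : Set V)).Walk x y)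
      (_ : ¬G.Adj ↑x v) (_ : G.Adj ↑y v),
      ∃ q p : ({v}ᶜ : Set V), G.Adj ↑q ↑p ∧ ¬G.Adj ↑q v ∧ G.Adj ↑p v ∧
        (G.induce ({v}ᶜ : Set V)).Reachable x q ∧
        (G.induce ({v}ᶜ : Set V)).Reachable x p := by
  intro x y w
  induction w with
  | nil => intro hx hy; exact absurd hy hx
  | @cons a b c h _ ih =>
    intro hx hy
    by_cases hb : G.Adj ↑b v
    · exact ⟨a, b, h, hx, hb, Reachable.refl _, Adj.reachable h⟩
    · obtain ⟨q, p, h1, h2, h3, h4, h5⟩ := ih hb hy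
      exact ⟨q, p, h1, h2, h3, (Adj.reachable h).trans h4, (Adj.reachable h).trans h5⟩

lemma find_p4 {V : Type*} [Fintype V] (G : SimpleGraph V) (v : V)
    (hG : G.Preconnected) (hGc : Gᶜ.Preconnected)
    (hdis : ¬(G.induce ({v}ᶜ : Set V)).Preconnected) :
    Nonempty (pathGraph 4 ↪g G) := by
  set s : Set V := {v}ᶜ with hs
  set G' := G.induce s with hG'
  -- a pair of non-reachable vertices in G'
  rw [SimpleGraph.Preconnected] at hdis
  push_neg at hdis
  obtain ⟨x, y, hxy⟩ := hdis
  -- a non-neighbor w of v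
  obtain ⟨w, hw, hwv, -⟩ := walk_prefix Gᶜ ↑x v (hGc ↑x v).some x.2
  have hwv' : ¬G.Adj w v := ((SimpleGraph.compl_adj G w v).mp hwv).2
  -- neighbors of v reachable from x, y, w respectively
  obtain ⟨ax, hax, haxv, hrax⟩ := walk_prefix G ↑x v (hG ↑x v).some x.2
  obtain ⟨ay, hay, hayv, hray⟩ := walk_prefix G ↑y v (hG ↑y v).some y.2
  obtain ⟨aw, haw, hawv, hraw⟩ := walk_prefix G w v (hG w v).some hw
  -- a neighbor c of v not G'-reachable from w
  have hc : ∃ (c : V) (hc : c ∈ s), G.Adj c v ∧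
      ¬G'.Reachable ⟨w, hw⟩ ⟨c, hc⟩ := by
    by_cases h1 : G'.Reachable ⟨w, hw⟩ ⟨ax, hax⟩
    · refine ⟨ay, hay, hayv, fun h2 => hxy ?_⟩
      exact (hrax.trans h1.symm).trans (h2.trans hray.symm)
    · exact ⟨ax, hax, haxv, h1⟩
  obtain ⟨c, hcs, hcv, hcr⟩ := hc
  -- boundary pair on a walk from w to aw
  obtain ⟨q, p, hqp, hqv, hpv, hrq, hrp⟩ :=
    walk_boundary G v ⟨w, hw⟩ ⟨aw, haw⟩ hraw.some hwv' hawv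
  -- assemble the P4 : q - p - v - c
  refine p4_emb_of_verts G ↑q ↑p v c hqp hpv hcv.symm hqv ?_ ?_
  · intro hadj
    exact hcr (hrq.trans (Adj.reachable (show G'.Adj q ⟨c, hcs⟩ from hadj)))
  · intro hadj
    exact hcr (hrp.trans (Adj.reachable (show G'.Adj p ⟨c, hcs⟩ from hadj)))

lemma compl_induce {V : Type*} (G : SimpleGraph V) (s : Set V) :
    (G.induce s)ᶜ = Gᶜ.induce s := by
  ext a b
  simp [SimpleGraph.compl_adj, Subtype.coe_injective.ne_iff]

lemma first_adj {V : Type*} {G : SimpleGraph V} {a b : V} (h : G.Reachable a b)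
    (hab : a ≠ b) : ∃ c, G.Adj a c := by
  obtain ⟨w⟩ := h
  cases w with
  | nil => exact absurd rfl hab
  | cons h' _ => exact ⟨_, h'⟩

lemma seinsche : ∀ (n : ℕ) (V : Type u) [Fintype V] (G : SimpleGraph V),
    Fintype.card V ≤ n → 2 ≤ Fintype.card V → G.Preconnected → Gᶜ.Preconnected →
    Nonempty (pathGraph 4 ↪g G) := by
  intro n
  induction n with
  | zero => intro V _ G hle h2 _ _; omega
  | succ n ih =>
    intro V _ G hle h2 hG hGc
    by_cases h3 : 3 ≤ Fintype.card V
    · have hne : Nonempty V := Fintype.card_pos_iff.mp (by omega)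
      obtain ⟨v⟩ := hne
      have hcard1 : Fintype.card ↥({v} : Set V) = 1 := by simp
      have hcards : Fintype.card ↥({v}ᶜ : Set V) = Fintype.card V - 1 := by
        rw [Fintype.card_compl_set, hcard1]
      by_cases hp : (G.induce ({v}ᶜ : Set V)).Preconnected
      · by_cases hpc : (Gᶜ.induce ({v}ᶜ : Set V)).Preconnected
        · obtain ⟨f⟩ := ih ↥({v}ᶜ : Set V) (G.induce ({v}ᶜ : Set V)) (by omega) (by omega) hp
            (by rw [compl_induce]; exact hpc)
          exact ⟨(SimpleGraph.Embedding.induce ({v}ᶜ : Set V)).comp f⟩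
        · obtain ⟨f⟩ := find_p4 Gᶜ v hGc (by rw [compl_compl]; exact hG) hpc
          exact ⟨p4ComplEmb f⟩
      · exact find_p4 G v hG hGc hp
    · -- exactly two vertices
      have h2' : Fintype.card V = 2 := by omega
      have hn2 : Nat.card V = 2 := by rw [Nat.card_eq_fintype_card]; exact h2'
      obtain ⟨a, b, hab, huniv⟩ := Nat.card_eq_two_iff.mp hn2
      have hmem : ∀ x : V, x = a ∨ x = b := by
        intro x
        have : x ∈ ({a, b} : Set V) := huniv ▸ Set.mem_univ x
        simpa using this
      have hadj : G.Adj a b := by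
        obtain ⟨c, hc⟩ := first_adj (hG a b) hab
        rcases hmem c with rfl | rfl
        · exact absurd rfl hc.ne'
        · exact hc
      have hadjc : Gᶜ.Adj a b := by
        obtain ⟨c, hc⟩ := first_adj (hGc a b) hab
        rcases hmem c with rfl | rfl
        · exact absurd rfl hc.ne'
        · exact hc
      exact absurd hadj ((SimpleGraph.compl_adj G a b).mp hadjc).2

lemma exists_split {V : Type u} [Fintype V] (G : SimpleGraph V) (hG : IsCograph G)
    (h2 : 2 ≤ Fintype.card V) :
    ∃ S T : Set V, S.Nonempty ∧ T.Nonempty ∧ (∀ v, v ∈ T ↔ v ∉ S) ∧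
      ((∀ u ∈ S, ∀ v, v ∉ S → ¬G.Adj u v) ∨ (∀ u ∈ S, ∀ v, v ∉ S → G.Adj u v)) := by
  have hnot : ¬(G.Preconnected ∧ Gᶜ.Preconnected) := by
    rintro ⟨ha, hb⟩
    exact hG.false (seinsche (Fintype.card V) V G le_rfl h2 ha hb).some
  by_cases hp : G.Preconnected
  · have hpc : ¬Gᶜ.Preconnected := fun h => hnot ⟨hp, h⟩
    rw [SimpleGraph.Preconnected] at hpc
    push_neg at hpc
    obtain ⟨a, b, hab⟩ := hpc
    refine ⟨{u | Gᶜ.Reachable a u}, {u | ¬Gᶜ.Reachable a u}, ⟨a, Reachable.refl a⟩,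
      ⟨b, hab⟩, fun v => Iff.rfl, Or.inr ?_⟩
    intro u hu v hv
    have hne : u ≠ v := fun h => hv (h ▸ hu)
    by_contra hadj
    exact hv (Reachable.trans hu (Adj.reachable ((SimpleGraph.compl_adj G u v).mpr ⟨hne, hadj⟩)))
  · rw [SimpleGraph.Preconnected] at hp
    push_neg at hp
    obtain ⟨a, b, hab⟩ := hp
    refine ⟨{u | G.Reachable a u}, {u | ¬G.Reachable a u}, ⟨a, Reachable.refl a⟩,
      ⟨b, hab⟩, fun v => Iff.rfl, Or.inl ?_⟩
    intro u hu v hv hadj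
    exact hv (Reachable.trans hu (Adj.reachable hadj))

def rangeIso {α β : Type*} {H : SimpleGraph α} {G : SimpleGraph β} (f : H ↪g G) :
    H ≃g G.induce (Set.range f) where
  toEquiv := Equiv.ofInjective f f.injective
  map_rel_iff' := by
    intro a b
    simp only [Equiv.ofInjective_apply, SimpleGraph.comap_adj, Function.Embedding.coe_subtype]
    exact f.map_rel_iff





lemma mulVec_eq_sum {V : Type*} [Fintype V] (G : SimpleGraph V) (x : V → ℝ) (u : V) :
    (adjM G).mulVec x u = ∑ w, if G.Adj u w then x w else 0 := by
  simp [adjM, Matrix.mulVec, dotProduct, SimpleGraph.adjMatrix_apply, ite_mul]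

lemma induce_mulVec {V : Type*} [Fintype V] (G : SimpleGraph V) (S : Set V) (x : V → ℝ)
    (u : ↥S) :
    (adjM (G.induce S)).mulVec (fun w : ↥S => x ↑w) u
      = ∑ w : ↥S, if G.Adj ↑u ↑w then x ↑w else 0 := by
  rw [mulVec_eq_sum]
  exact Finset.sum_congr rfl fun w _ => by simp [SimpleGraph.comap_adj]

lemma sum_split {V : Type*} [Fintype V] (S : Set V) (f : V → ℝ) :
    ∑ w, f w = (∑ w : ↥S, f ↑w) + ∑ w : {w : V // w ∉ S}, f ↑w :=
  (Fintype.sum_subtype_add_sum_subtype (· ∈ S) f).symm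

lemma sum_split2 {V : Type*} [Fintype V] (S T : Set V) (hST : ∀ v, v ∈ T ↔ v ∉ S)
    (f : V → ℝ) :
    ∑ w, f w = (∑ w : ↥S, f ↑w) + ∑ w : ↥T, f ↑w := by
  rw [sum_split S f]
  congr 1
  exact (Fintype.sum_equiv (Equiv.subtypeEquivRight hST) _ _ (fun w => rfl)).symm

lemma mulVec_part_union {V : Type*} [Fintype V] (G : SimpleGraph V) (S : Set V)
    (h : ∀ u ∈ S, ∀ v, v ∉ S → ¬G.Adj u v) (x : V → ℝ) (u : ↥S) :
    (adjM G).mulVec x ↑u = (adjM (G.induce S)).mulVec (fun w : ↥S => x ↑w) u := by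
  rw [mulVec_eq_sum, induce_mulVec, sum_split S (fun w => if G.Adj ↑u w then x w else 0)]
  have : ∀ w : {w : V // w ∉ S}, (if G.Adj ↑u ↑w then x ↑w else 0) = 0 := by
    intro w; simp [h ↑u u.2 ↑w w.2]
  rw [Finset.sum_congr rfl (fun w _ => this w), Finset.sum_const, smul_zero, add_zero]

lemma mulVec_part_join {V : Type*} [Fintype V] (G : SimpleGraph V) (S : Set V)
    (h : ∀ u ∈ S, ∀ v, v ∉ S → G.Adj u v) (x : V → ℝ) (u : ↥S) :
    (adjM G).mulVec x ↑u = (adjM (G.induce S)).mulVec (fun w : ↥S => x ↑w) u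
      + ((∑ w, x w) - ∑ w : ↥S, x ↑w) := by
  rw [mulVec_eq_sum, induce_mulVec, sum_split S (fun w => if G.Adj ↑u w then x w else 0)]
  have h2 : ∀ w : {w : V // w ∉ S}, (if G.Adj ↑u ↑w then x ↑w else 0) = x ↑w := by
    intro w; simp [h ↑u u.2 ↑w w.2]
  rw [Finset.sum_congr rfl (fun w _ => h2 w)]
  have h3 : (∑ w : {w : V // w ∉ S}, x ↑w) = (∑ w, x w) - ∑ w : ↥S, x ↑w := by
    rw [sum_split S x]; ring
  rw [h3]

lemma mulVec_mul {V : Type*} [Fintype V] (A : Matrix V V ℝ) (c : ℝ) (y : V → ℝ) (u : V) :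
    A.mulVec (fun w => c * y w) u = c * A.mulVec y u := by
  have := congrFun (A.mulVec_smul c y) u
  exact this

lemma join_inj_arith (a b : ℝ) (hb : b ≠ 0) (hnS : b⁻¹ * a < -1) (hnC : a⁻¹ * b < -1) :
    False := by
  have ha : a ≠ 0 := by
    intro h; rw [h, mul_zero] at hnS; linarith
  have key : (b⁻¹ * a) * (a⁻¹ * b) = 1 := by field_simp
  nlinarith [mul_pos (show (0:ℝ) < -(b⁻¹*a) - 1 by linarith)
    (show (0:ℝ) < -(a⁻¹*b) - 1 by linarith), key]

lemma join_neg_arith (a b : ℝ) (h1 : 1 + b ≠ 0) (h2 : 1 + a ≠ 0)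
    (hnS : (1+b)⁻¹ * a < -1) (hnC : (1+a)⁻¹ * b < -1) : a + b < -1 := by
  have keyA : a = (1+b) * ((1+b)⁻¹ * a) := by field_simp
  rcases lt_or_gt_of_ne h1 with hb | hb
  · have h3 := mul_lt_mul_of_neg_left hnS hb
    have ha2 : 0 < 1 + a := by nlinarith
    have keyB : b = (1+a) * ((1+a)⁻¹ * b) := by field_simp
    have h4 := mul_lt_mul_of_pos_left hnC ha2
    nlinarith
  · have h3 := mul_lt_mul_of_pos_left hnS hb
    nlinarith

def InjP {V : Type*} [Fintype V] (G : SimpleGraph V) (μ : ℝ) : Prop :=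
  ∀ x : V → ℝ, (∀ u, (adjM G).mulVec x u = μ * x u) → ∀ u, x u = 0

def NegP {V : Type*} [Fintype V] (G : SimpleGraph V) (μ : ℝ) : Prop :=
  ∀ x : V → ℝ, (∀ u, μ * x u - (adjM G).mulVec x u = 1) → ∑ v, x v < -1

lemma spectral (μ : ℝ) (hμ1 : -1 < μ) (hμ0 : μ < 0) :
    ∀ (n : ℕ) (V : Type u) [Fintype V] (G : SimpleGraph V), Fintype.card V ≤ n →
      IsCograph G → InjP G μ ∧ (Nonempty V → NegP G μ) := by
  intro n
  induction n with
  | zero =>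
    intro V _ G hle _
    have hVe : IsEmpty V := Fintype.card_eq_zero_iff.mp (by omega)
    exact ⟨fun x _ u => isEmptyElim u, fun ⟨v⟩ => isEmptyElim v⟩
  | succ n ih =>
    intro V _ G hle hcog
    by_cases h2 : 2 ≤ Fintype.card V
    case neg =>
      have hss : Subsingleton V := Fintype.card_le_one_iff_subsingleton.mp (by omega)
      have hzero : ∀ (x : V → ℝ) (u : V), (adjM G).mulVec x u = 0 := by
        intro x u
        rw [mulVec_eq_sum]
        refine Finset.sum_eq_zero fun w _ => ?_
        have hw : w = u := Subsingleton.elim _ _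
        subst hw
        simp
      constructor
      · intro x hx u
        have h := hx u
        rw [hzero] at h
        have hμ : μ ≠ 0 := by linarith
        rcases mul_eq_zero.mp h.symm with h' | h'
        · exact absurd h' hμ
        · exact h'
      · rintro ⟨v⟩ x hx
        have h := hx v
        rw [hzero, sub_zero] at h
        have hc1 : Fintype.card V = 1 := by
          have := Fintype.card_pos_iff.mpr ⟨v⟩; omega
        have hsum : ∑ w, x w = x v := by
          calc ∑ w, x w = ∑ _w : V, x v :=
                Finset.sum_congr rfl (fun w _ => by rw [Subsingleton.elim w v])
            _ = (Fintype.card V : ℝ) * x v := by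
                rw [Finset.sum_const, nsmul_eq_mul]; rfl
            _ = x v := by rw [hc1]; ring
        rw [hsum]
        have hxv0 : x v < 0 := by nlinarith
        nlinarith [mul_lt_mul_of_pos_right (show -μ < 1 by linarith)
          (show (0:ℝ) < -x v by linarith)]
    case pos =>
      obtain ⟨S, T, hS, hT, hST, hsplit⟩ := exists_split G hcog h2
      obtain ⟨v0, hv0⟩ := hS
      obtain ⟨w0, hw0⟩ := hT
      have hw0' : w0 ∉ S := (hST w0).mp hw0
      have hv0' : v0 ∉ T := fun h => (hST v0).mp h hv0
      have hcS : Fintype.card ↥S ≤ n := by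
        have h1 := Fintype.card_subtype_lt (p := (· ∈ S)) hw0'
        have he : Fintype.card {x : V // (fun x => x ∈ S) x} = Fintype.card ↥S := rfl
        have h2 : Fintype.card ↥S < Fintype.card V := by convert h1
        omega
      have hcT : Fintype.card ↥T ≤ n := by
        have h1 := Fintype.card_subtype_lt (p := (· ∈ T)) hv0'
        have he : Fintype.card {x : V // (fun x => x ∈ T) x} = Fintype.card ↥T := rfl
        have h2 : Fintype.card ↥T < Fintype.card V := by convert h1
        omega
      haveI hneS : Nonempty ↥S := ⟨⟨v0, hv0⟩⟩
      haveI hneT : Nonempty ↥T := ⟨⟨w0, hw0⟩⟩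
      obtain ⟨injS, negS'⟩ := ih ↥S (G.induce S) hcS (hcog.induce S)
      obtain ⟨injC, negC'⟩ := ih ↥T (G.induce T) hcT (hcog.induce T)
      have negS := negS' hneS
      have negC := negC' hneT
      have hmem : ∀ v : V, v ∉ T → v ∈ S := fun v hv =>
        not_not.mp fun h => hv ((hST v).mpr h)
      rcases hsplit with hun | hjo
      · -- disjoint union case
        have hunC : ∀ u ∈ T, ∀ v, v ∉ T → ¬G.Adj u v :=
          fun u hu v hv ha => hun v (hmem v hv) u ((hST u).mp hu) ha.symm
        constructor
        · intro x hx u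
          have hxS : ∀ w : ↥S, x ↑w = 0 :=
            injS (fun w : ↥S => x ↑w)
              (fun u' => by rw [← mulVec_part_union G S hun x u']; exact hx ↑u')
          have hxC : ∀ w : ↥T, x ↑w = 0 :=
            injC (fun w : ↥T => x ↑w)
              (fun u' => by rw [← mulVec_part_union G T hunC x u']; exact hx ↑u')
          by_cases hu : u ∈ S
          · exact hxS ⟨u, hu⟩
          · exact hxC ⟨u, (hST u).mpr hu⟩
        · intro _ x hx
          have hS' : ∑ w : ↥S, x ↑w < -1 :=
            negS (fun w : ↥S => x ↑w)
              (fun u' => by rw [← mulVec_part_union G S hun x u']; exact hx ↑u')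
          have hC' : ∑ w : ↥T, x ↑w < -1 :=
            negC (fun w : ↥T => x ↑w)
              (fun u' => by rw [← mulVec_part_union G T hunC x u']; exact hx ↑u')
          rw [sum_split2 S T hST x]
          linarith
      · -- join case
        have hjoC : ∀ u ∈ T, ∀ v, v ∉ T → G.Adj u v :=
          fun u hu v hv => (hjo v (hmem v hv) u ((hST u).mp hu)).symm
        have hts : ∀ x : V → ℝ, ∑ w, x w = (∑ w : ↥S, x ↑w) + ∑ w : ↥T, x ↑w :=
          fun x => sum_split2 S T hST x
        have htsT : ∀ x : V → ℝ, (∑ w, x w) - (∑ w : ↥T, x ↑w) = ∑ w : ↥S, x ↑w := by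
          intro x; rw [hts x]; ring
        have htsS : ∀ x : V → ℝ, (∑ w, x w) - (∑ w : ↥S, x ↑w) = ∑ w : ↥T, x ↑w := by
          intro x; rw [hts x]; ring
        constructor
        · -- injectivity, join case
          intro x hx u
          have eqS : ∀ u' : ↥S,
              (adjM (G.induce S)).mulVec (fun w : ↥S => x ↑w) u'
                = μ * x ↑u' - ∑ w : ↥T, x ↑w := by
            intro u'
            have h := mulVec_part_join G S hjo x u'
            rw [hx ↑u', htsS x] at h
            linarith
          have eqC : ∀ u' : ↥T,
              (adjM (G.induce T)).mulVec (fun w : ↥T => x ↑w) u'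
                = μ * x ↑u' - ∑ w : ↥S, x ↑w := by
            intro u'
            have h := mulVec_part_join G T hjoC x u'
            rw [hx ↑u', htsT x] at h
            linarith
          set sS := ∑ w : ↥S, x ↑w with hsSd
          set sC := ∑ w : ↥T, x ↑w with hsCd
          by_cases hsC : sC = 0
          · have hxS : ∀ w : ↥S, x ↑w = 0 :=
              injS _ (fun u' => by rw [eqS u', hsC, sub_zero])
            have hsS : sS = 0 := by
              rw [hsSd]; exact Finset.sum_eq_zero fun w _ => hxS w
            have hxC : ∀ w : ↥T, x ↑w = 0 :=
              injC _ (fun u' => by rw [eqC u', hsS, sub_zero])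
            by_cases hu : u ∈ S
            · exact hxS ⟨u, hu⟩
            · exact hxC ⟨u, (hST u).mpr hu⟩
          · exfalso
            have hnS : sC⁻¹ * sS < -1 := by
              have h := negS (fun w : ↥S => sC⁻¹ * x ↑w) (fun u' => by
                rw [mulVec_mul, eqS u']
                calc μ * (sC⁻¹ * x ↑u') - sC⁻¹ * (μ * x ↑u' - sC)
                    = sC⁻¹ * sC := by ring
                  _ = 1 := inv_mul_cancel₀ hsC)
              rw [← Finset.mul_sum] at h
              exact h
            have hsS0 : sS ≠ 0 := by
              intro h0; rw [h0, mul_zero] at hnS; linarith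
            have hnC : sS⁻¹ * sC < -1 := by
              have h := negC (fun w : ↥T => sS⁻¹ * x ↑w) (fun u' => by
                rw [mulVec_mul, eqC u']
                calc μ * (sS⁻¹ * x ↑u') - sS⁻¹ * (μ * x ↑u' - sS)
                    = sS⁻¹ * sS := by ring
                  _ = 1 := inv_mul_cancel₀ hsS0)
              rw [← Finset.mul_sum] at h
              exact h
            exact join_inj_arith sS sC hsC hnS hnC
        · -- negativity, join case
          intro _ x hx
          have eqS : ∀ u' : ↥S,
              μ * x ↑u' - (adjM (G.induce S)).mulVec (fun w : ↥S => x ↑w) u'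
                = 1 + ∑ w : ↥T, x ↑w := by
            intro u'
            have h := mulVec_part_join G S hjo x u'
            have h2 := hx ↑u'
            rw [h, htsS x] at h2
            linarith
          have eqC : ∀ u' : ↥T,
              μ * x ↑u' - (adjM (G.induce T)).mulVec (fun w : ↥T => x ↑w) u'
                = 1 + ∑ w : ↥S, x ↑w := by
            intro u'
            have h := mulVec_part_join G T hjoC x u'
            have h2 := hx ↑u'
            rw [h, htsT x] at h2
            linarith
          set sS := ∑ w : ↥S, x ↑w with hsSd
          set sC := ∑ w : ↥T, x ↑w with hsCd
          rw [hts x]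
          by_cases h1 : (1:ℝ) + sC = 0
          · exfalso
            have hxS : ∀ w : ↥S, x ↑w = 0 :=
              injS _ (fun u' => by have h := eqS u'; linarith)
            have hsS : sS = 0 := by
              rw [hsSd]; exact Finset.sum_eq_zero fun w _ => hxS w
            have hC : sC < -1 :=
              negC _ (fun u' => by have h := eqC u'; rw [hsS] at h; linarith)
            linarith
          by_cases h2' : (1:ℝ) + sS = 0
          · exfalso
            have hxC : ∀ w : ↥T, x ↑w = 0 :=
              injC _ (fun u' => by have h := eqC u'; linarith)
            have hsC : sC = 0 := by
              rw [hsCd]; exact Finset.sum_eq_zero fun w _ => hxC w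
            have hS'' : sS < -1 :=
              negS _ (fun u' => by have h := eqS u'; rw [hsC] at h; linarith)
            linarith
          have hnS : (1 + sC)⁻¹ * sS < -1 := by
            have h := negS (fun w : ↥S => (1 + sC)⁻¹ * x ↑w) (fun u' => by
              rw [mulVec_mul]
              have h3 := eqS u'
              calc μ * ((1 + sC)⁻¹ * x ↑u')
                    - (1 + sC)⁻¹ * (adjM (G.induce S)).mulVec (fun w : ↥S => x ↑w) u'
                  = (1 + sC)⁻¹ * (μ * x ↑u'
                    - (adjM (G.induce S)).mulVec (fun w : ↥S => x ↑w) u') := by ring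
                _ = (1 + sC)⁻¹ * (1 + sC) := by rw [h3]
                _ = 1 := inv_mul_cancel₀ h1)
            rw [← Finset.mul_sum] at h
            exact h
          have hnC : (1 + sS)⁻¹ * sC < -1 := by
            have h := negC (fun w : ↥T => (1 + sS)⁻¹ * x ↑w) (fun u' => by
              rw [mulVec_mul]
              have h3 := eqC u'
              calc μ * ((1 + sS)⁻¹ * x ↑u')
                    - (1 + sS)⁻¹ * (adjM (G.induce T)).mulVec (fun w : ↥T => x ↑w) u'
                  = (1 + sS)⁻¹ * (μ * x ↑u'
                    - (adjM (G.induce T)).mulVec (fun w : ↥T => x ↑w) u') := by ring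
                _ = (1 + sS)⁻¹ * (1 + sS) := by rw [h3]
                _ = 1 := inv_mul_cancel₀ h2')
            rw [← Finset.mul_sum] at h
            exact h
          exact join_neg_arith sS sC h1 h2' hnS hnC

/-- A graph is a cograph iff no induced subgraph has an eigenvalue in the open
interval (-1, 0). -/
theorem cograph_iff_no_induced_eig_in_Ioo {V : Type*} [Fintype V] (G : SimpleGraph V) :
    IsCograph G ↔ ∀ s : Set V, ¬ ∃ μ ∈ Set.Ioo (-1 : ℝ) 0, HasEig (G.induce s) μ := by
  constructor
  · intro hcog s
    rintro ⟨μ, hμ, heig⟩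
    obtain ⟨x, hx0, hxe⟩ := (hasEig_iff _ μ).mp heig
    have hinj := (spectral μ hμ.1 hμ.2 (Fintype.card ↥s) ↥s (G.induce s) le_rfl
      (hcog.induce s)).1
    apply hx0
    funext u
    exact hinj x (fun u' => by
      have := congrFun hxe u'
      simpa [Pi.smul_apply, smul_eq_mul] using this) u
  · intro h
    by_contra hnc
    rw [IsCograph, not_isEmpty_iff] at hnc
    obtain ⟨f⟩ := hnc
    have h5 : Real.sqrt 5 ^ 2 = 5 := Real.sq_sqrt (by norm_num)
    have h5n := Real.sqrt_nonneg 5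
    have hμmem : ((1 - Real.sqrt 5)/2 : ℝ) ∈ Set.Ioo (-1:ℝ) 0 :=
      ⟨by nlinarith, by nlinarith⟩
    exact h (Set.range f) ⟨(1 - Real.sqrt 5)/2, hμmem,
      @p4_hasEig _ (@Subtype.fintype _ _ (fun a => Classical.propDecidable (a ∈ Set.range ⇑f)) _) _ (rangeIso f)⟩
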